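/- Let (A,B) be a conic transition in which A is annihilated by ω(T) where ω ≡ T^d mod p, and suppose r = p-rank(A) < d. Then p-rank(B) = r, i.e. the transition is stable. -/

import Mathlib

open Polynomial Finset

section Stmt13Aux
variable {A B : Type*} [AddCommGroup A] [AddCommGroup B]

private lemma end_sum_apply' {ι : Type*} (s : Finset ι) (f : ι → AddMonoid.End A) (x : A) :
    (∑ i ∈ s, f i) x = ∑ i ∈ s, f i x := by
  classical
  induction s using Finset.induction with
  | empty => rfl
  | insert _ _ h ih => rw [Finset.sum_insert h, Finset.sum_insert h, ← ih]; rfl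

private lemma aeval_apply_eq_sum' (T : AddMonoid.End A) (f : Polynomial ℤ) (x : A) {n : ℕ}
    (hn : f.natDegree < n) :
    Polynomial.aeval T f x = ∑ i ∈ range n, f.coeff i • ((T ^ i) x) := by
  rw [Polynomial.aeval_eq_sum_range' hn, end_sum_apply']
  exact Finset.sum_congr rfl fun i _ => rfl

private lemma aeval_mul_apply' (T : AddMonoid.End A) (f g : Polynomial ℤ) (x : A) :
    Polynomial.aeval T (f * g) x = Polynomial.aeval T f (Polynomial.aeval T g x) := by
  rw [map_mul]; rfl

private lemma aeval_sub_apply' (T : AddMonoid.End A) (f g : Polynomial ℤ) (x : A) :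
    Polynomial.aeval T (f - g) x = Polynomial.aeval T f x - Polynomial.aeval T g x := by
  rw [map_sub]; rfl

private lemma aeval_add_apply' (T : AddMonoid.End A) (f g : Polynomial ℤ) (x : A) :
    Polynomial.aeval T (f + g) x = Polynomial.aeval T f x + Polynomial.aeval T g x := by
  rw [map_add]; rfl

private lemma aeval_C_apply' (T : AddMonoid.End A) (n : ℤ) (x : A) :
    Polynomial.aeval T (C n) x = n • x := by
  rw [aeval_C, algebraMap_int_eq, eq_intCast, AddMonoid.End.intCast_apply]

private lemma aeval_X_pow_apply' (T : AddMonoid.End A) (n : ℕ) (x : A) :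
    Polynomial.aeval T ((X : Polynomial ℤ) ^ n) x = (T ^ n) x := by
  have : Polynomial.aeval T (X ^ n : Polynomial ℤ) = T ^ n := by
    rw [map_pow, Polynomial.aeval_X]
  rw [this]

private lemma N_aeval_comm' (N : B →+ A) (TB : AddMonoid.End B) (TA : AddMonoid.End A)
    (hcomm : ∀ x : B, N (TB x) = TA (N x)) (f : Polynomial ℤ) (x : B) :
    N (Polynomial.aeval TB f x) = Polynomial.aeval TA f (N x) := by
  have hpow : ∀ (n : ℕ) (x : B), N ((TB ^ n) x) = (TA ^ n) (N x) := by
    intro n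
    induction n with
    | zero => intro x; rfl
    | succ n ih =>
        intro x
        rw [pow_succ, pow_succ]
        show N ((TB ^ n) (TB x)) = (TA ^ n) (TA (N x))
        rw [ih, hcomm]
  rw [aeval_apply_eq_sum' TB f x (lt_add_one _),
    aeval_apply_eq_sum' TA f (N x) (lt_add_one _), map_sum]
  exact Finset.sum_congr rfl fun i _ => by rw [map_zsmul, hpow]

end Stmt13Aux

/-- A *conic transition* `(A, B)` (Definition 2.4 of the paper): finite abelian
`p`-groups `A`, `B` which are cyclic `ℤ_p[T]`-modules (via commuting endomorphisms
`TA`, `TB` coming from the action of a cyclic `p`-group), with a surjective norm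
`N : B → A`, an injective lift `ι : A → B` satisfying `N ∘ ι = p`, a distinguished-type
polynomial `ω ≡ T^d mod p` annihilating `A` with `ι ∘ N = ν(TB)` for
`ν = ((ω+1)^p − 1)/ω = Σ_{i<p} (ω+1)^i`, kernel `ker N = ω·B`, and
`ω·x = 0 → x ∈ ι(A)`. -/
structure ConicTransition (p : ℕ) (A B : Type*) [AddCommGroup A] [AddCommGroup B] where
  hp : p.Prime
  N : B →+ A
  ι : A →+ B
  TA : AddMonoid.End A
  TB : AddMonoid.End B
  genA : A
  genB : B
  ω : Polynomial ℤ
  d : ℕ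
  hNsurj : Function.Surjective N
  hιinj : Function.Injective ι
  hNι : ∀ x : A, N (ι x) = p • x
  hcommN : ∀ x : B, N (TB x) = TA (N x)
  hcommι : ∀ x : A, ι (TA x) = TB (ι x)
  hTAnil : ∃ M : ℕ, TA ^ M = 0
  hTBnil : ∃ M : ℕ, TB ^ M = 0
  hgen : N genB = genA
  hcycA : ∀ x : A, ∃ f : Polynomial ℤ, x = Polynomial.aeval TA f genA
  hcycB : ∀ x : B, ∃ f : Polynomial ℤ, x = Polynomial.aeval TB f genB
  hωmonic : ω.Monic
  hωdeg : ω.natDegree = d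
  hdpos : 0 < d
  hωmodp : ∀ i < d, (p : ℤ) ∣ ω.coeff i
  hω0 : ω.coeff 0 = 0
  hωA : ∀ x : A, Polynomial.aeval TA ω x = 0
  hν : ∀ x : B, ι (N x) =
    Polynomial.aeval TB (∑ i ∈ Finset.range p, (ω + 1) ^ i) x
  hker : ∀ x : B, N x = 0 ↔ ∃ y : B, x = Polynomial.aeval TB ω y
  hωι : ∀ x : B, Polynomial.aeval TB ω x = 0 → ∃ a : A, x = ι a
  hpA : ∀ x : A, ∃ k : ℕ, p ^ k • x = 0
  hpB : ∀ x : B, ∃ k : ℕ, p ^ k • x = 0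

/-- In a conic transition `(A, B)` where `ω ≡ T^d mod p` annihilates `A`
and `r = p`-rank`(A) < d`, the transition is stable: `p`-rank`(B) = r`. -/
theorem stmt_13 (p : ℕ) (A B : Type*) [AddCommGroup A] [AddCommGroup B]
    [Fintype A] [Fintype B] (ct : ConicTransition p A B)
    (r : ℕ)
    (hrA : Nat.card (A ⧸ (p • AddMonoidHom.id A).range) = p ^ r)
    (hrd : r < ct.d) :
    Nat.card (B ⧸ (p • AddMonoidHom.id B).range) = p ^ r := by
  classical
  haveI : NeZero p := ⟨ct.hp.pos.ne'⟩
  set PA := (p • AddMonoidHom.id A).range with hPAdef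
  set PB := (p • AddMonoidHom.id B).range with hPBdef
  have memPA : ∀ x : A, (∃ y : A, p • y = x) → x ∈ PA := fun x ⟨y, hy⟩ => ⟨y, hy⟩
  have memPA' : ∀ x : A, x ∈ PA → ∃ y : A, p • y = x := fun x ⟨y, hy⟩ => ⟨y, hy⟩
  have memPB : ∀ x : B, (∃ y : B, p • y = x) → x ∈ PB := fun x ⟨y, hy⟩ => ⟨y, hy⟩
  have PB_pmul : ∀ (k : ℤ) (z : B), ((p : ℤ) * k) • z ∈ PB := by
    intro k z
    refine memPB _ ⟨k • z, ?_⟩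
    rw [← natCast_zsmul, ← mul_smul]
  have PA_end : ∀ (e : AddMonoid.End A) (x : A), x ∈ PA → e x ∈ PA := by
    rintro e x ⟨y, rfl⟩
    exact memPA _ ⟨e y, by show p • e y = e (p • y); rw [map_nsmul]⟩
  have PA_pmul : ∀ (k : ℤ) (z : A), ((p : ℤ) * k) • z ∈ PA := by
    intro k z
    refine memPA _ ⟨k • z, ?_⟩
    rw [← natCast_zsmul, ← mul_smul]
  -- p ^ K kills genA
  obtain ⟨K, hK⟩ := ct.hpA ct.genA
  ------------------------------------------------------------------
  -- STEP 0 : T^r genA ∈ pA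
  ------------------------------------------------------------------
  have step0 : ∃ y : A, (ct.TA ^ r) ct.genA = p • y := by
    by_contra hno
    push_neg at hno
    have hex : ∃ k : ℕ, (ct.TA ^ k) ct.genA ∈ PA := by
      obtain ⟨M, hM⟩ := ct.hTAnil
      refine ⟨M, ?_⟩
      rw [hM]
      show (0 : A) ∈ PA
      exact zero_mem PA
    set s := Nat.find hex with hsdef
    have hsmem : (ct.TA ^ s) ct.genA ∈ PA := Nat.find_spec hex
    have hsmin : ∀ k < s, (ct.TA ^ k) ct.genA ∉ PA := fun k hk => Nat.find_min hex hk
    have hrs : r < s := by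
      by_contra hcon
      push_neg at hcon
      have hmem : (ct.TA ^ r) ct.genA ∈ PA := by
        have hpow : ct.TA ^ r = ct.TA ^ (r - s) * ct.TA ^ s := by
          rw [← pow_add]; congr 1; omega
        rw [hpow]
        show (ct.TA ^ (r - s)) ((ct.TA ^ s) ct.genA) ∈ PA
        exact PA_end _ _ hsmem
      obtain ⟨y, hy⟩ := memPA' _ hmem
      exact hno y hy.symm
    have hhigh : ∀ k, s ≤ k → (ct.TA ^ k) ct.genA ∈ PA := by
      intro k hk
      have hpow : ct.TA ^ k = ct.TA ^ (k - s) * ct.TA ^ s := by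
        rw [← pow_add]; congr 1; omega
      rw [hpow]
      show (ct.TA ^ (k - s)) ((ct.TA ^ s) ct.genA) ∈ PA
      exact PA_end _ _ hsmem
    -- independence of T^i genA, i ≤ r, modulo pA
    have L : ∀ c : ℕ → ℤ, (∑ i ∈ range (r + 1), c i • (ct.TA ^ i) ct.genA) ∈ PA →
        ∀ j ≤ r, (p : ℤ) ∣ c j := by
      intro c hc
      by_contra hcon
      push_neg at hcon
      have hfind : ∃ j, j ≤ r ∧ ¬ (p : ℤ) ∣ c j := by
        obtain ⟨j0, h1, h2⟩ := hcon; exact ⟨j0, h1, h2⟩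
      set j := Nat.find hfind with hjdef
      obtain ⟨hjr, hjd⟩ := Nat.find_spec hfind
      have hjmin : ∀ i < j, (p : ℤ) ∣ c i := by
        intro i hi
        by_contra hcd
        exact Nat.find_min hfind hi ⟨by omega, hcd⟩
      set m := s - 1 - j with hmdef
      have happ : (∑ i ∈ range (r + 1), c i • (ct.TA ^ (m + i)) ct.genA) ∈ PA := by
        have h1 := PA_end (ct.TA ^ m) _ hc
        have h2 : (ct.TA ^ m) (∑ i ∈ range (r + 1), c i • (ct.TA ^ i) ct.genA)
            = ∑ i ∈ range (r + 1), c i • (ct.TA ^ (m + i)) ct.genA := by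
          rw [map_sum]
          refine Finset.sum_congr rfl fun i _ => ?_
          rw [map_zsmul, pow_add]
          rfl
        rwa [h2] at h1
      have hjmem : j ∈ range (r + 1) := by simp; omega
      have herase : (∑ i ∈ (range (r + 1)).erase j, c i • (ct.TA ^ (m + i)) ct.genA) ∈ PA := by
        refine AddSubgroup.sum_mem _ fun i hi => ?_
        have hine : i ≠ j := (Finset.mem_erase.1 hi).1
        rcases lt_or_gt_of_ne hine with hlt | hgt
        · obtain ⟨k, hk⟩ := hjmin i hlt
          rw [hk]
          exact PA_pmul _ _
        · exact AddSubgroup.zsmul_mem _ (hhigh (m + i) (by omega)) _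
      have hkey : c j • (ct.TA ^ (s - 1)) ct.genA ∈ PA := by
        have hsplit := Finset.add_sum_erase (range (r + 1))
          (fun i => c i • (ct.TA ^ (m + i)) ct.genA) hjmem
        have : c j • (ct.TA ^ (m + j)) ct.genA
            = (∑ i ∈ range (r + 1), c i • (ct.TA ^ (m + i)) ct.genA)
              - ∑ i ∈ (range (r + 1)).erase j, c i • (ct.TA ^ (m + i)) ct.genA := by
          rw [← hsplit]; abel
        rw [show s - 1 = m + j by omega, this]
        exact sub_mem happ herase
      -- coprimality step
      have hpint : Prime (p : ℤ) := Nat.prime_iff_prime_int.mp ct.hp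
      have hcop : IsCoprime ((p : ℤ) ^ K) (c j) :=
        IsCoprime.pow_left (hpint.coprime_iff_not_dvd.2 hjd)
      obtain ⟨u, v, huv⟩ := hcop
      set z := (ct.TA ^ (s - 1)) ct.genA with hzdef
      have hz0 : (p : ℤ) ^ K • z = 0 := by
        have h1 : (p ^ K : ℕ) • z = (ct.TA ^ (s - 1)) ((p ^ K : ℕ) • ct.genA) :=
          (map_nsmul _ _ _).symm
        rw [hK, map_zero] at h1
        rw [show ((p : ℤ) ^ K) = ((p ^ K : ℕ) : ℤ) by push_cast; ring, natCast_zsmul]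
        exact h1
      have hzmem : z ∈ PA := by
        have h1 : (u * (p : ℤ) ^ K + v * c j) • z = z := by rw [huv, one_smul]
        have h2 : (u * (p : ℤ) ^ K + v * c j) • z
            = u • ((p : ℤ) ^ K • z) + v • (c j • z) := by
          rw [add_smul, mul_smul, mul_smul]
        rw [h2, hz0, smul_zero, zero_add] at h1
        rw [← h1]
        exact AddSubgroup.zsmul_mem _ hkey _
      exact hsmin (s - 1) (by omega) hzmem
    -- injection (Fin (r+1) → ZMod p) ↪ A ⧸ PA
    have hinj : Function.Injective (fun c : Fin (r + 1) → ZMod p =>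
        (QuotientAddGroup.mk (∑ i ∈ range (r + 1),
          (fun k : ℕ => if hk : k < r + 1 then (((c ⟨k, hk⟩).val : ℤ)) else 0) i •
            (ct.TA ^ i) ct.genA) : A ⧸ PA)) := by
      intro c1 c2 hF
      simp only at hF
      set cc1 : ℕ → ℤ := fun k => if hk : k < r + 1 then (((c1 ⟨k, hk⟩).val : ℤ)) else 0 with hcc1
      set cc2 : ℕ → ℤ := fun k => if hk : k < r + 1 then (((c2 ⟨k, hk⟩).val : ℤ)) else 0 with hcc2
      have hmem : (∑ i ∈ range (r + 1), (cc2 i - cc1 i) • (ct.TA ^ i) ct.genA) ∈ PA := by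
        have h1 := QuotientAddGroup.eq.mp hF
        have h2 : -(∑ i ∈ range (r + 1), cc1 i • (ct.TA ^ i) ct.genA)
            + (∑ i ∈ range (r + 1), cc2 i • (ct.TA ^ i) ct.genA)
            = ∑ i ∈ range (r + 1), (cc2 i - cc1 i) • (ct.TA ^ i) ct.genA := by
          rw [neg_add_eq_sub, ← Finset.sum_sub_distrib]
          exact Finset.sum_congr rfl fun i _ => (sub_smul _ _ _).symm
        rwa [h2] at h1
      have hdvd := L _ hmem
      funext i
      have hd : (p : ℤ) ∣ cc2 i.1 - cc1 i.1 := hdvd i.1 (by omega)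
      have h3 : ((cc2 i.1 - cc1 i.1 : ℤ) : ZMod p) = 0 :=
        (ZMod.intCast_zmod_eq_zero_iff_dvd _ p).2 hd
      have h4 : cc1 i.1 = ((c1 i).val : ℤ) := by
        rw [hcc1]; simp only [i.isLt, dif_pos]
      have h5 : cc2 i.1 = ((c2 i).val : ℤ) := by
        rw [hcc2]; simp only [i.isLt, dif_pos]
      rw [h4, h5] at h3
      push_cast at h3
      rw [sub_eq_zero, ZMod.natCast_val, ZMod.natCast_val, ZMod.cast_id, ZMod.cast_id] at h3
      exact h3.symm
    have hcard := Nat.card_le_card_of_injective _ hinj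
    have hfc : Nat.card (Fin (r + 1) → ZMod p) = p ^ (r + 1) := by
      simp [Nat.card_eq_fintype_card, ZMod.card]
    rw [hfc, hrA] at hcard
    have := Nat.pow_lt_pow_succ (ct.hp.one_lt) (n := r)
    omega
  ------------------------------------------------------------------
  -- STEP 1 : T^r genB ∈ pB
  ------------------------------------------------------------------
  obtain ⟨ya, hya⟩ := step0
  obtain ⟨h, hh⟩ := ct.hcycA ya
  set θ : Polynomial ℤ := X ^ r - C (p : ℤ) * h with hθdef
  have hθa : Polynomial.aeval ct.TA θ ct.genA = 0 := by
    rw [hθdef, aeval_sub_apply', aeval_mul_apply', aeval_C_apply', aeval_X_pow_apply',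
      ← hh, hya, natCast_zsmul, sub_self]
  have hNθb : ct.N (Polynomial.aeval ct.TB θ ct.genB) = 0 := by
    rw [N_aeval_comm' ct.N ct.TB ct.TA ct.hcommN, ct.hgen, hθa]
  obtain ⟨yB, hyB⟩ := (ct.hker _).1 hNθb
  obtain ⟨f, hf⟩ := ct.hcycB yB
  rw [hf] at hyB
  have hann : Polynomial.aeval ct.TB (θ - ct.ω * f) ct.genB = 0 := by
    rw [aeval_sub_apply', aeval_mul_apply', ← hyB, sub_self]
  -- decompose ω
  obtain ⟨w, hw⟩ : ∃ w : Polynomial ℤ, ct.ω = X ^ ct.d + C (p : ℤ) * w := by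
    have hdvd : C (p : ℤ) ∣ (ct.ω - X ^ ct.d) := by
      rw [Polynomial.C_dvd_iff_dvd_coeff]
      intro i
      rcases lt_trichotomy i ct.d with hi | hi | hi
      · rw [Polynomial.coeff_sub, Polynomial.coeff_X_pow, if_neg (by omega)]
        simpa using ct.hωmodp i hi
      · rw [Polynomial.coeff_sub, Polynomial.coeff_X_pow, if_pos hi, hi]
        have : ct.ω.coeff ct.d = 1 := by
          have := ct.hωmonic
          rw [Polynomial.Monic, Polynomial.leadingCoeff, ct.hωdeg] at this
          exact this
        rw [this, sub_self]
        exact dvd_zero _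
      · rw [Polynomial.coeff_sub, Polynomial.coeff_X_pow, if_neg (by omega)]
        have : ct.ω.coeff i = 0 :=
          Polynomial.coeff_eq_zero_of_natDegree_lt (by rw [ct.hωdeg]; omega)
        rw [this, sub_zero]
        exact dvd_zero _
    obtain ⟨w, hw⟩ := hdvd
    exact ⟨w, by rw [← hw]; ring⟩
  -- nilpotency exponent
  obtain ⟨M0, hM0⟩ := ct.hTBnil
  set M := M0 + 1 with hMdef
  have hM : ct.TB ^ M = 0 := by
    rw [hMdef, pow_succ, hM0, zero_mul]
  have hTBhigh : ∀ n, M ≤ n → ct.TB ^ n = 0 := by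
    intro n hn
    rw [show n = (n - M) + M by omega, pow_add, hM, mul_zero]
  -- polynomial identity
  have hXd : (X : Polynomial ℤ) ^ ct.d = X ^ r * X ^ (ct.d - r) := by
    rw [← pow_add]; congr 1; omega
  have h1 : θ - ct.ω * f
      = X ^ r * (1 - X ^ (ct.d - r) * f) - C (p : ℤ) * (h + w * f) := by
    rw [hθdef, hw, hXd]; ring
  have h2 : ((X : Polynomial ℤ) ^ (ct.d - r) * f) ^ M = X ^ ((ct.d - r) * M) * f ^ M := by
    rw [mul_pow, ← pow_mul]
  have hgeom : (∑ i ∈ range M, ((X : Polynomial ℤ) ^ (ct.d - r) * f) ^ i)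
      * (1 - X ^ (ct.d - r) * f) = 1 - (X ^ (ct.d - r) * f) ^ M := by
    linear_combination (-1 : Polynomial ℤ) * geom_sum_mul ((X : Polynomial ℤ) ^ (ct.d - r) * f) M
  have hkey : (X : Polynomial ℤ) ^ r
      = (∑ i ∈ range M, ((X : Polynomial ℤ) ^ (ct.d - r) * f) ^ i) * (θ - ct.ω * f)
        + C (p : ℤ) * ((∑ i ∈ range M, ((X : Polynomial ℤ) ^ (ct.d - r) * f) ^ i) * (h + w * f))
        + X ^ r * (X ^ ((ct.d - r) * M) * f ^ M) := by
    rw [h1]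
    linear_combination (-((X : Polynomial ℤ) ^ r)) * hgeom + ((X : Polynomial ℤ) ^ r) * h2
  -- apply to genB
  have hTrb : ∃ yb : B, (ct.TB ^ r) ct.genB = p • yb := by
    refine ⟨Polynomial.aeval ct.TB
      ((∑ i ∈ range M, ((X : Polynomial ℤ) ^ (ct.d - r) * f) ^ i) * (h + w * f)) ct.genB, ?_⟩
    have e1 : Polynomial.aeval ct.TB
        ((∑ i ∈ range M, ((X : Polynomial ℤ) ^ (ct.d - r) * f) ^ i) * (θ - ct.ω * f))
        ct.genB = 0 := by
      rw [aeval_mul_apply', hann, map_zero]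
    have e2 : Polynomial.aeval ct.TB
        (C (p : ℤ) * ((∑ i ∈ range M, ((X : Polynomial ℤ) ^ (ct.d - r) * f) ^ i) * (h + w * f)))
        ct.genB
        = p • Polynomial.aeval ct.TB
            ((∑ i ∈ range M, ((X : Polynomial ℤ) ^ (ct.d - r) * f) ^ i) * (h + w * f)) ct.genB := by
      rw [aeval_mul_apply', aeval_C_apply', natCast_zsmul]
    have e3 : Polynomial.aeval ct.TB
        ((X : Polynomial ℤ) ^ r * (X ^ ((ct.d - r) * M) * f ^ M)) ct.genB = 0 := by
      rw [aeval_mul_apply', aeval_mul_apply', aeval_X_pow_apply', aeval_X_pow_apply',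
        hTBhigh ((ct.d - r) * M) (Nat.le_mul_of_pos_left M (by omega))]
      show (ct.TB ^ r) ((0 : AddMonoid.End B) _) = 0
      rw [AddMonoid.End.zero_apply, map_zero]
    have := congrArg (fun q : Polynomial ℤ => Polynomial.aeval ct.TB q ct.genB) hkey
    rw [aeval_X_pow_apply', aeval_add_apply', aeval_add_apply', e1, e2, e3,
      zero_add, add_zero] at this
    exact this
  obtain ⟨yb, hyb⟩ := hTrb
  ------------------------------------------------------------------
  -- spanning : every x ∈ B is, mod pB, a ℤ-combination of T^i genB, i < r
  ------------------------------------------------------------------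
  have hkr : ∀ k : ℕ, (ct.TB ^ (k + r)) ct.genB = p • ((ct.TB ^ k) yb) := by
    intro k
    rw [pow_add]
    show (ct.TB ^ k) ((ct.TB ^ r) ct.genB) = _
    rw [hyb, map_nsmul]
  have hspan : ∀ x : B, ∃ c : ℕ → ℤ,
      x - (∑ i ∈ range r, c i • (ct.TB ^ i) ct.genB) ∈ PB := by
    intro x
    obtain ⟨g, rfl⟩ := ct.hcycB x
    refine ⟨g.coeff, ?_⟩
    set n := max (g.natDegree + 1) r with hndef
    rw [aeval_apply_eq_sum' ct.TB g ct.genB (show g.natDegree < n by omega)]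
    have hsplit : (∑ i ∈ range n, g.coeff i • (ct.TB ^ i) ct.genB)
        = (∑ i ∈ range r, g.coeff i • (ct.TB ^ i) ct.genB)
          + ∑ i ∈ Finset.Ico r n, g.coeff i • (ct.TB ^ i) ct.genB := by
      exact (Finset.sum_range_add_sum_Ico _ (show r ≤ n by omega)).symm
    rw [hsplit, add_sub_cancel_left]
    refine AddSubgroup.sum_mem _ fun i hi => ?_
    have hri : r ≤ i := (Finset.mem_Ico.1 hi).1
    have hTi : (ct.TB ^ i) ct.genB = p • ((ct.TB ^ (i - r)) yb) := by
      have := hkr (i - r)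
      rwa [show i - r + r = i by omega] at this
    rw [hTi, ← natCast_zsmul, ← mul_smul, mul_comm]
    exact PB_pmul _ _
  ------------------------------------------------------------------
  -- upper bound : card (B ⧸ PB) ≤ p ^ r
  ------------------------------------------------------------------
  have hcardle : Nat.card (B ⧸ PB) ≤ p ^ r := by
    have hsurj : Function.Surjective (fun c : Fin r → ZMod p =>
        (QuotientAddGroup.mk (∑ i ∈ range r,
          (fun k : ℕ => if hk : k < r then (((c ⟨k, hk⟩).val : ℤ)) else 0) i •
            (ct.TB ^ i) ct.genB) : B ⧸ PB)) := by
      intro q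
      obtain ⟨x, rfl⟩ := QuotientAddGroup.mk_surjective q
      obtain ⟨c, hc⟩ := hspan x
      refine ⟨fun i => ((c i.1 : ℤ) : ZMod p), ?_⟩
      simp only
      set cc : ℕ → ℤ := fun k =>
        if hk : k < r then ((((c k : ℤ) : ZMod p)).val : ℤ) else 0 with hccdef
      rw [QuotientAddGroup.eq]
      have hterm : ∀ i ∈ range r, (c i - cc i) • (ct.TB ^ i) ct.genB ∈ PB := by
        intro i hi
        have hir : i < r := Finset.mem_range.1 hi
        have hcast : ((c i - cc i : ℤ) : ZMod p) = 0 := by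
          rw [hccdef]
          simp only [hir, dif_pos]
          push_cast [ZMod.natCast_val, ZMod.cast_id]
          ring
        obtain ⟨k, hk⟩ := (ZMod.intCast_zmod_eq_zero_iff_dvd _ p).1 hcast
        rw [hk]
        exact PB_pmul _ _
      have hmem : (∑ i ∈ range r, (c i - cc i) • (ct.TB ^ i) ct.genB) ∈ PB :=
        AddSubgroup.sum_mem _ hterm
      have heq : -(∑ i ∈ range r, cc i • (ct.TB ^ i) ct.genB) + x
          = (x - ∑ i ∈ range r, c i • (ct.TB ^ i) ct.genB)
            + ∑ i ∈ range r, (c i - cc i) • (ct.TB ^ i) ct.genB := by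
        have hsum : (∑ i ∈ range r, (c i - cc i) • (ct.TB ^ i) ct.genB)
            = (∑ i ∈ range r, c i • (ct.TB ^ i) ct.genB)
              - ∑ i ∈ range r, cc i • (ct.TB ^ i) ct.genB := by
          rw [← Finset.sum_sub_distrib]
          exact Finset.sum_congr rfl fun i _ => sub_smul _ _ _
        rw [hsum]
        abel
      rw [heq]
      exact add_mem hc hmem
    have hcard := Nat.card_le_card_of_surjective _ hsurj
    have hfc : Nat.card (Fin r → ZMod p) = p ^ r := by
      simp [Nat.card_eq_fintype_card, ZMod.card]
    rwa [hfc] at hcard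
  ------------------------------------------------------------------
  -- lower bound : p ^ r ∣ card (B ⧸ PB)
  ------------------------------------------------------------------
  have hdvd : p ^ r ∣ Nat.card (B ⧸ PB) := by
    have hle : PB ≤ PA.comap ct.N := by
      rintro x ⟨y, rfl⟩
      show ct.N ((p • AddMonoidHom.id B) y) ∈ PA
      refine memPA _ ⟨ct.N y, ?_⟩
      show p • ct.N y = ct.N (p • y)
      rw [map_nsmul]
    have hφsurj : Function.Surjective (QuotientAddGroup.map PB PA ct.N hle) := by
      intro q
      obtain ⟨xA, rfl⟩ := QuotientAddGroup.mk_surjective q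
      obtain ⟨xB, rfl⟩ := ct.hNsurj xA
      exact ⟨QuotientAddGroup.mk xB, QuotientAddGroup.map_mk _ _ _ _ _⟩
    have := AddSubgroup.card_dvd_of_surjective _ hφsurj
    rwa [hrA] at this
  exact le_antisymm hcardle (Nat.le_of_dvd Nat.card_pos hdvd)
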